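/- Let $n\ge 1$ and let $m_1,\dots,m_n$ be nonnegative integers. The number of permutations $\sigma\in S_n$ such that for every $i\in\{1,\dots,n\}$ the cycle decomposition of $\sigma$ contains at least $m_i$ cycles of length $i$ (where cycles of length $1$ are fixed points) is at most $n!\cdot\prod_{i=1}^{n}\frac{1}{i^{m_i}\,m_i!}$. Equivalently, the probability that a uniformly random permutation of $S_n$ contains at least $m_i$ cycles of length $i$ for each $i$ is at most $\prod_{i=1}^{n}\frac{1}{i^{m_i}\,m_i!}$. -/

import Mathlib

open Equiv Function Finset

/-- The number of cycles of length `i` in the cycle decomposition of `σ`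
(cycles of length `1` being fixed points). -/
def cycleCount {n : ℕ} (σ : Equiv.Perm (Fin n)) (i : ℕ) : ℕ :=
  if i = 1 then (Finset.univ.filter fun x => σ x = x).card
  else σ.cycleType.count i

namespace PC

variable {n : ℕ}

/-- period of a point under a permutation -/
noncomputable def per (σ : Equiv.Perm (Fin n)) (x : Fin n) : ℕ :=
  Function.minimalPeriod ⇑σ x

theorem mem_pp (σ : Equiv.Perm (Fin n)) (x : Fin n) : x ∈ periodicPts ⇑σ :=
  ⟨orderOf σ, orderOf_pos σ, by
    simp [IsPeriodicPt, IsFixedPt, Equiv.Perm.iterate_eq_pow, pow_orderOf_eq_one]⟩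

theorem per_pos (σ : Equiv.Perm (Fin n)) (x : Fin n) : 0 < per σ x :=
  minimalPeriod_pos_of_mem_periodicPts (mem_pp σ x)

theorem pow_per (σ : Equiv.Perm (Fin n)) (x : Fin n) : (σ ^ per σ x) x = x := by
  rw [← Equiv.Perm.iterate_eq_pow]; exact iterate_minimalPeriod

theorem pow_mod_per (σ : Equiv.Perm (Fin n)) (x : Fin n) (a : ℕ) :
    (σ ^ (a % per σ x)) x = (σ ^ a) x := by
  rw [← Equiv.Perm.iterate_eq_pow, ← Equiv.Perm.iterate_eq_pow]
  exact iterate_mod_minimalPeriod_eq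

theorem pow_congr_per (σ : Equiv.Perm (Fin n)) (x : Fin n) {a b : ℕ}
    (h : a ≡ b [MOD per σ x]) : (σ ^ a) x = (σ ^ b) x := by
  rw [← pow_mod_per σ x a, ← pow_mod_per σ x b, h]

theorem pow_eq_mod_per (σ : Equiv.Perm (Fin n)) (x : Fin n) {a b : ℕ}
    (h : (σ ^ a) x = (σ ^ b) x) : a ≡ b [MOD per σ x] := by
  have := iterate_eq_iterate_iff_of_lt_minimalPeriod
    (f := ⇑σ) (x := x) (m := a % per σ x) (n := b % per σ x)
    (Nat.mod_lt _ (per_pos σ x)) (Nat.mod_lt _ (per_pos σ x))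
  have h2 : (σ ^ (a % per σ x)) x = (σ ^ (b % per σ x)) x := by
    rw [pow_mod_per, pow_mod_per]; exact h
  simp only [Equiv.Perm.iterate_eq_pow] at this
  exact this.mp h2

theorem per_pow_apply (σ : Equiv.Perm (Fin n)) (x : Fin n) (s : ℕ) :
    per σ ((σ ^ s) x) = per σ x := by
  have := minimalPeriod_apply_iterate (mem_pp σ x) s
  simpa only [per, Equiv.Perm.iterate_eq_pow] using this

theorem per_eq_one_iff (σ : Equiv.Perm (Fin n)) (x : Fin n) :
    per σ x = 1 ↔ σ x = x :=
  minimalPeriod_eq_one_iff_isFixedPt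

theorem sameCycle_per (σ : Equiv.Perm (Fin n)) {x y : Fin n}
    (h : σ.SameCycle x y) : per σ x = per σ y := by
  obtain ⟨s, -, rfl⟩ := Equiv.Perm.SameCycle.exists_pow_eq' h
  exact (per_pow_apply σ x s).symm


-- period of a point in the support of a cycle factor equals the cycle length
theorem per_eq_card_support {σ c : Equiv.Perm (Fin n)}
    (hc : c ∈ σ.cycleFactorsFinset) {x : Fin n} (hx : x ∈ c.support) :
    per σ x = c.support.card := by
  classical
  have hcx : c = σ.cycleOf x := Equiv.Perm.cycle_is_cycleOf hx hc
  have hcyc : c.IsCycle := (Equiv.Perm.mem_cycleFactorsFinset_iff.mp hc).1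
  have hiter : ∀ a : ℕ, (c ^ a) x = (σ ^ a) x := by
    intro a; rw [hcx]; exact Equiv.Perm.cycleOf_pow_apply_self σ x a
  have hper : per σ x = Function.minimalPeriod ⇑c x := by
    unfold per
    rw [Function.minimalPeriod_eq_minimalPeriod_iff]
    intro a
    simp only [IsPeriodicPt, IsFixedPt, Equiv.Perm.iterate_eq_pow, hiter]
  rw [hper, ← hcyc.orderOf]
  have hxs : c x ≠ x := Equiv.Perm.mem_support.mp hx
  apply Nat.dvd_antisymm
  · exact IsPeriodicPt.minimalPeriod_dvd (by
      simp [IsPeriodicPt, IsFixedPt, Equiv.Perm.iterate_eq_pow, pow_orderOf_eq_one])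
  · apply orderOf_dvd_of_pow_eq_one
    set k := Function.minimalPeriod ⇑c x with hk
    have hck : (c ^ k) x = x := by
      rw [← Equiv.Perm.iterate_eq_pow]; exact iterate_minimalPeriod
    ext y
    by_cases hy : c y = y
    · simp [Equiv.Perm.pow_apply_eq_self_of_apply_eq_self hy]
    · obtain ⟨z, hz⟩ := hcyc.sameCycle hxs hy
      have : (c ^ k) ((c ^ z) x) = (c ^ z) ((c ^ k) x) := by
        rw [← Equiv.Perm.mul_apply, ← Equiv.Perm.mul_apply, ← zpow_natCast,
          ← zpow_add, ← zpow_add, add_comm]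
      simp only [← hz, this, hck, Equiv.Perm.one_apply]

theorem not_sameCycle_of_mem_factors {σ c c' : Equiv.Perm (Fin n)}
    (hc : c ∈ σ.cycleFactorsFinset) (hc' : c' ∈ σ.cycleFactorsFinset)
    (hne : c ≠ c') {x y : Fin n} (hx : x ∈ c.support) (hy : y ∈ c'.support) :
    ¬ σ.SameCycle x y := by
  classical
  intro h
  apply hne
  rw [Equiv.Perm.cycle_is_cycleOf hx hc, Equiv.Perm.cycle_is_cycleOf hy hc']
  exact Equiv.Perm.SameCycle.cycleOf_eq h

theorem sameCycle_eq_of_fixed {σ : Equiv.Perm (Fin n)} {x y : Fin n}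
    (hx : σ x = x) (h : σ.SameCycle x y) : y = x := by
  obtain ⟨z, hz⟩ := h
  rw [← hz, Equiv.Perm.zpow_apply_eq_self_of_apply_eq_self hx]


/-- for `i ≠ 1`, `cycleCount σ i` is the number of cycle factors with support card `i` -/
theorem cycleCount_eq_card_filter (σ : Equiv.Perm (Fin n)) {i : ℕ} (hi : i ≠ 1) :
    cycleCount σ i = (σ.cycleFactorsFinset.filter fun c => c.support.card = i).card := by
  classical
  rw [cycleCount, if_neg hi, Equiv.Perm.cycleType]
  rw [Multiset.count_map]
  rw [Finset.card, Finset.filter_val]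
  congr 1
  apply Multiset.filter_congr
  intro c _
  simp [eq_comm, Function.comp]

theorem per_sum_le (σ : Equiv.Perm (Fin n)) (m : ℕ → ℕ)
    (hσ : ∀ i ∈ Finset.Icc 1 n, m i ≤ cycleCount σ i) :
    ∑ i ∈ Finset.Icc 1 n, i * m i ≤ n := by
  classical
  have step1 : ∀ i ∈ Finset.Icc 1 n,
      i * m i ≤ (Finset.univ.filter fun x : Fin n => per σ x = i).card := by
    intro i hi
    obtain ⟨hi1, hin⟩ := Finset.mem_Icc.mp hi
    rcases eq_or_ne i 1 with rfl | hne
    · have : (Finset.univ.filter fun x : Fin n => σ x = x) ⊆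
          (Finset.univ.filter fun x : Fin n => per σ x = 1) := by
        intro x hx
        simp only [Finset.mem_filter, Finset.mem_univ, true_and] at hx ⊢
        exact (per_eq_one_iff σ x).mpr hx
      calc 1 * m 1 = m 1 := one_mul _
        _ ≤ cycleCount σ 1 := hσ 1 hi
        _ = (Finset.univ.filter fun x : Fin n => σ x = x).card := by
            rw [cycleCount, if_pos rfl]
        _ ≤ _ := Finset.card_le_card this
    · -- i ≥ 2 case
      set F := σ.cycleFactorsFinset.filter fun c => c.support.card = i with hF
      have hdisj : ∀ c ∈ F, ∀ c' ∈ F, c ≠ c' → Disjoint c.support c'.support := by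
        intro c hc c' hc' hne'
        have h1 := Finset.mem_filter.mp hc
        have h2 := Finset.mem_filter.mp hc'
        have := σ.cycleFactorsFinset_pairwise_disjoint h1.1 h2.1 hne'
        exact Equiv.Perm.disjoint_iff_disjoint_support.mp this
      have hsub : F.biUnion (fun c => c.support) ⊆
          (Finset.univ.filter fun x : Fin n => per σ x = i) := by
        intro x hx
        obtain ⟨c, hc, hxc⟩ := Finset.mem_biUnion.mp hx
        obtain ⟨hcf, hcard⟩ := Finset.mem_filter.mp hc
        simp only [Finset.mem_filter, Finset.mem_univ, true_and]
        rw [per_eq_card_support hcf hxc, hcard]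
      calc i * m i ≤ i * cycleCount σ i := Nat.mul_le_mul_left i (hσ i hi)
        _ = i * F.card := by rw [cycleCount_eq_card_filter σ hne]
        _ = ∑ c ∈ F, c.support.card := by
            rw [Finset.sum_congr rfl (fun c hc => (Finset.mem_filter.mp hc).2),
              Finset.sum_const, smul_eq_mul, mul_comm]
        _ = (F.biUnion (fun c => c.support)).card := (Finset.card_biUnion hdisj).symm
        _ ≤ _ := Finset.card_le_card hsub
  calc ∑ i ∈ Finset.Icc 1 n, i * m i
      ≤ ∑ i ∈ Finset.Icc 1 n, (Finset.univ.filter fun x : Fin n => per σ x = i).card :=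
        Finset.sum_le_sum step1
    _ = ((Finset.Icc 1 n).biUnion fun i =>
          Finset.univ.filter fun x : Fin n => per σ x = i).card := by
        rw [Finset.card_biUnion]
        intro a _ b _ hab
        apply Finset.disjoint_filter_filter'
        exact disjoint_iff_inf_le.mpr fun x ⟨h1, h2⟩ => absurd (h1.symm.trans h2) hab
    _ ≤ (Finset.univ : Finset (Fin n)).card := Finset.card_le_card (Finset.subset_univ _)
    _ = n := Finset.card_univ.trans (Fintype.card_fin n)


theorem exists_basepoints (σ : Equiv.Perm (Fin n)) (m : ℕ → ℕ) {i : ℕ}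
    (hi1 : 1 ≤ i) (h : m i ≤ cycleCount σ i) :
    ∃ b : Fin (m i) → Fin n, (∀ j, per σ (b j) = i) ∧
      (∀ j j', σ.SameCycle (b j) (b j') → j = j') := by
  classical
  rcases eq_or_lt_of_le hi1 with rfl | hi2
  · -- i = 1 : fixed points
    rw [cycleCount, if_pos rfl] at h
    obtain ⟨t, hts, htc⟩ := Finset.exists_subset_card_eq h
    set u := (Fintype.equivFinOfCardEq (by rw [Fintype.card_coe, htc] :
      Fintype.card ↥t = m 1)).symm with hu
    refine ⟨fun j => (u j : Fin n), fun j => ?_, fun j j' hsc => ?_⟩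
    · have : σ ((u j : Fin n)) = (u j : Fin n) := by
        have := hts (u j).2
        simpa using (Finset.mem_filter.mp this).2
      exact (per_eq_one_iff σ _).mpr this
    · have hfix : σ ((u j : Fin n)) = (u j : Fin n) := by
        have := hts (u j).2
        simpa using (Finset.mem_filter.mp this).2
      have : (u j' : Fin n) = (u j : Fin n) := sameCycle_eq_of_fixed hfix hsc
      have : u j' = u j := Subtype.ext this
      exact (u.injective this).symm
  · -- i ≥ 2 : cycles of length i
    have hne : i ≠ 1 := by omega
    rw [cycleCount_eq_card_filter σ hne] at h
    obtain ⟨t, hts, htc⟩ := Finset.exists_subset_card_eq h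
    set u := (Fintype.equivFinOfCardEq (by rw [Fintype.card_coe, htc] :
      Fintype.card ↥t = m i)).symm with hu
    have hmem : ∀ j, (u j : Equiv.Perm (Fin n)) ∈
        σ.cycleFactorsFinset.filter fun c => c.support.card = i :=
      fun j => hts (u j).2
    have hsupp : ∀ j, ((u j : Equiv.Perm (Fin n)).support).Nonempty := by
      intro j
      rw [← Finset.card_pos, (Finset.mem_filter.mp (hmem j)).2]
      omega
    refine ⟨fun j => ((u j : Equiv.Perm (Fin n)).support).min' (hsupp j),
      fun j => ?_, fun j j' hsc => ?_⟩
    · rw [per_eq_card_support (Finset.mem_filter.mp (hmem j)).1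
        (Finset.min'_mem _ (hsupp j))]
      exact (Finset.mem_filter.mp (hmem j)).2
    · by_contra hjj
      have hune : (u j : Equiv.Perm (Fin n)) ≠ (u j' : Equiv.Perm (Fin n)) := by
        intro he
        exact hjj (u.injective (Subtype.ext he))
      exact not_sameCycle_of_mem_factors (Finset.mem_filter.mp (hmem j)).1
        (Finset.mem_filter.mp (hmem j')).1 hune
        (Finset.min'_mem _ (hsupp j)) (Finset.min'_mem _ (hsupp j')) hsc


section Main

variable (n : ℕ) (m : ℕ → ℕ)

/-- The index type for positions: cycle length `i`, cycle index `j`, offset `o`. -/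
def Q : Type := Σ i : {x : ℕ // x ∈ Finset.Icc 1 n}, (Fin (m i.1) × Fin i.1)

/-- total number of marked positions -/
def K : ℕ := ∑ i ∈ Finset.Icc 1 n, i * m i

/-- Permutations with the prescribed lower bounds on cycle counts. -/
def S : Type := {σ : Equiv.Perm (Fin n) // ∀ i ∈ Finset.Icc 1 n, m i ≤ cycleCount σ i}

/-- rotation and reordering data -/
def E : Type := (i : {x : ℕ // x ∈ Finset.Icc 1 n}) →
  ((Fin (m i.1) → Fin i.1) × Equiv.Perm (Fin (m i.1)))

instance : Fintype (Q n m) := by unfold Q; infer_instance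
noncomputable instance : Fintype (S n m) := by classical unfold S; infer_instance
instance : Fintype (E n m) := by unfold E; infer_instance

variable {n m}

noncomputable def bb (σ : S n m) (i : {x : ℕ // x ∈ Finset.Icc 1 n}) :
    Fin (m i.1) → Fin n :=
  (exists_basepoints σ.1 m (Finset.mem_Icc.mp i.2).1 (σ.2 i.1 i.2)).choose

theorem bb_per (σ : S n m) (i : {x : ℕ // x ∈ Finset.Icc 1 n}) (j : Fin (m i.1)) :
    per σ.1 (bb σ i j) = i.1 :=
  (exists_basepoints σ.1 m (Finset.mem_Icc.mp i.2).1 (σ.2 i.1 i.2)).choose_spec.1 j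

theorem bb_sc (σ : S n m) (i : {x : ℕ // x ∈ Finset.Icc 1 n}) {j j' : Fin (m i.1)}
    (h : σ.1.SameCycle (bb σ i j) (bb σ i j')) : j = j' :=
  (exists_basepoints σ.1 m (Finset.mem_Icc.mp i.2).1 (σ.2 i.1 i.2)).choose_spec.2 j j' h

noncomputable def wfun (σ : S n m) (e : E n m) (q : Q n m) : Fin n :=
  (σ.1 ^ ((q.2.2 : ℕ) + (((e q.1).1 ((e q.1).2 q.2.1)) : ℕ)))
    (bb σ q.1 ((e q.1).2 q.2.1))

/-- successor position: next element along the same cycle -/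
def nQ (q : Q n m) : Q n m :=
  ⟨q.1, q.2.1, ⟨((q.2.2 : ℕ) + 1) % q.1.1, Nat.mod_lt _ q.2.2.pos⟩⟩

theorem nQ_surjective : Surjective (nQ (n := n) (m := m)) := by
  rintro ⟨⟨i, hi⟩, j, o⟩
  have hipos : 0 < i := o.pos
  refine ⟨⟨⟨i, hi⟩, j, ⟨((o : ℕ) + (i - 1)) % i, Nat.mod_lt _ hipos⟩⟩, ?_⟩
  unfold nQ
  simp only
  congr 1
  ext
  · rfl
  · simp only
    have h1 : ((o : ℕ) + (i - 1)) % i + 1 ≡ ((o : ℕ) + (i - 1)) + 1 [MOD i] :=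
      (Nat.mod_modEq _ i).add_right 1
    have h2 : ((o : ℕ) + (i - 1)) + 1 = (o : ℕ) + i := by omega
    calc (((o : ℕ) + (i - 1)) % i + 1) % i
        = (((o : ℕ) + (i - 1)) + 1) % i := h1
      _ = ((o : ℕ) + i) % i := by rw [h2]
      _ = (o : ℕ) % i := by rw [Nat.add_mod_right]
      _ = (o : ℕ) := Nat.mod_eq_of_lt o.isLt

theorem condW (σ : S n m) (e : E n m) (q : Q n m) :
    σ.1 (wfun σ e q) = wfun σ e (nQ q) := by
  obtain ⟨i, j, o⟩ := q
  unfold wfun nQ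
  simp only
  set z := bb σ i ((e i).2 j) with hz
  set r := (((e i).1 ((e i).2 j)) : ℕ) with hr
  have h1 : σ.1 ((σ.1 ^ ((o : ℕ) + r)) z) = (σ.1 ^ (((o : ℕ) + r) + 1)) z := by
    rw [pow_succ', Equiv.Perm.mul_apply]
  rw [h1]
  apply pow_congr_per
  rw [bb_per]
  have : ((o : ℕ) + 1) % i.1 ≡ (o : ℕ) + 1 [MOD i.1] := Nat.mod_modEq _ _
  calc (o : ℕ) + r + 1 = ((o : ℕ) + 1) + r := by ring
    _ ≡ (((o : ℕ) + 1) % i.1) + r [MOD i.1] := (this.symm.add_right r)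

theorem wfun_injective (σ : S n m) (e : E n m) : Injective (wfun σ e) := by
  rintro ⟨i₁, j, o⟩ ⟨i₂, j', o'⟩ h
  have hper : i₁ = i₂ := by
    apply Subtype.ext
    have := congrArg (per σ.1) h
    unfold wfun at this
    simp only [per_pow_apply, bb_per] at this
    exact this
  subst hper
  unfold wfun at h
  simp only at h
  set p := (e i₁).2 with hp
  set r := (e i₁).1 with hrr
  have hsc : σ.1.SameCycle (bb σ i₁ (p j)) (bb σ i₁ (p j')) := by
    have s1 : σ.1.SameCycle (bb σ i₁ (p j))
        ((σ.1 ^ ((o : ℕ) + (r (p j) : ℕ))) (bb σ i₁ (p j))) :=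
      ⟨((((o : ℕ) + (r (p j) : ℕ) : ℕ)) : ℤ), by rw [zpow_natCast]⟩
    have s2 : σ.1.SameCycle (bb σ i₁ (p j'))
        ((σ.1 ^ ((o' : ℕ) + (r (p j') : ℕ))) (bb σ i₁ (p j'))) :=
      ⟨((((o' : ℕ) + (r (p j') : ℕ) : ℕ)) : ℤ), by rw [zpow_natCast]⟩
    rw [h] at s1
    exact s1.trans s2.symm
  have hj : p j = p j' := bb_sc σ i₁ hsc
  have hjj : j = j' := p.injective hj
  subst hjj
  rw [hj] at h
  have hmod := pow_eq_mod_per σ.1 _ h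
  rw [bb_per] at hmod
  have hoo : (o : ℕ) = (o' : ℕ) := by
    have h2 : (o : ℕ) % i₁.1 = (o' : ℕ) % i₁.1 := hmod.add_right_cancel' _
    rwa [Nat.mod_eq_of_lt o.isLt, Nat.mod_eq_of_lt o'.isLt] at h2
  have : o = o' := Fin.ext hoo
  rw [this]

noncomputable def wemb (σ : S n m) (e : E n m) : Q n m ↪ Fin n :=
  ⟨wfun σ e, wfun_injective σ e⟩

-- complement of the range of an embedding
def cmpl (w : Q n m ↪ Fin n) : Finset (Fin n) :=
  Finset.univ \ Finset.image ⇑w Finset.univ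

theorem cardQ : Fintype.card (Q n m) = K n m := by
  rw [show K n m = ∑ i ∈ Finset.Icc 1 n, i * m i from rfl]
  rw [← Finset.sum_coe_sort (Finset.Icc 1 n) (fun i => i * m i)]
  unfold Q
  rw [Fintype.card_sigma]
  congr 1
  ext i
  rw [Fintype.card_prod, Fintype.card_fin, Fintype.card_fin, mul_comm]

theorem cmpl_card (w : Q n m ↪ Fin n) : (cmpl w).card = n - K n m := by
  unfold cmpl
  rw [Finset.card_sdiff_of_subset (Finset.subset_univ _), Finset.card_image_of_injective _ w.injective,
    Finset.card_univ, Finset.card_univ, Fintype.card_fin, cardQ]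

noncomputable def eqvC (w : Q n m ↪ Fin n) : Fin (n - K n m) ≃ {x : Fin n // x ∈ cmpl w} :=
  ((cmpl w).orderIsoOfFin (cmpl_card w)).toEquiv

noncomputable def Lfun (w : Q n m ↪ Fin n) : Fin (n - K n m) → Fin n :=
  fun t => (eqvC w t : Fin n)

theorem Lfun_surj (w : Q n m ↪ Fin n) {x : Fin n} (hx : x ∈ cmpl w) :
    ∃ t, Lfun w t = x :=
  ⟨(eqvC w).symm ⟨x, hx⟩, by
    unfold Lfun
    rw [Equiv.apply_symm_apply]⟩

theorem mem_cmpl_iff (σ : S n m) (e : E n m) (x : Fin n) :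
    x ∈ cmpl (wemb σ e) ↔ σ.1 x ∈ cmpl (wemb σ e) := by
  unfold cmpl
  simp only [Finset.mem_sdiff, Finset.mem_univ, true_and, Finset.mem_image]
  constructor
  · intro hx hc
    apply hx
    obtain ⟨q, hq⟩ := hc
    obtain ⟨q₀, hq0⟩ := nQ_surjective q
    refine ⟨q₀, ?_⟩
    have hc2 : σ.1 (wfun σ e q₀) = wfun σ e q := by rw [condW σ e q₀, hq0]
    have hq' : wfun σ e q = σ.1 x := hq
    exact σ.1.injective (hc2.trans hq')
  · intro hx hc
    apply hx
    obtain ⟨q, hq⟩ := hc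
    refine ⟨nQ q, ?_⟩
    have hq' : wfun σ e q = x := hq
    show wfun σ e (nQ q) = σ.1 x
    rw [← condW σ e q, hq']

noncomputable def resPerm (σ : Equiv.Perm (Fin n)) (w : Q n m ↪ Fin n)
    (hm : ∀ x, x ∈ cmpl w ↔ σ x ∈ cmpl w) : Equiv.Perm (Fin (n - K n m)) :=
  (eqvC w).permCongr.symm (σ.subtypePerm (fun x => (hm x).symm))

theorem resPerm_key (σ : Equiv.Perm (Fin n)) (w : Q n m ↪ Fin n)
    (hm : ∀ x, x ∈ cmpl w ↔ σ x ∈ cmpl w) (t : Fin (n - K n m)) :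
    Lfun w (resPerm σ w hm t) = σ (Lfun w t) := by
  unfold resPerm Lfun
  simp only [Equiv.permCongr_symm, Equiv.permCongr_apply, Equiv.symm_symm]
  rw [Equiv.apply_symm_apply]
  rfl

/-- The injection -/
noncomputable def Phi (a : S n m × E n m) :
    (Q n m ↪ Fin n) × Equiv.Perm (Fin (n - K n m)) :=
  ⟨wemb a.1 a.2, resPerm a.1.1 (wemb a.1 a.2) (mem_cmpl_iff a.1 a.2)⟩

theorem Phi_injective : Injective (Phi (n := n) (m := m)) := by
  rintro ⟨sa, ea⟩ ⟨sb, eb⟩ h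
  have hw : wemb sa ea = wemb sb eb := congrArg Prod.fst h
  have hwf : ∀ q, wfun sa ea q = wfun sb eb q := fun q =>
    congrFun (congrArg (fun f : Q n m ↪ Fin n => ⇑f) hw) q
  have h2 : resPerm sa.1 (wemb sa ea) (mem_cmpl_iff sa ea)
      = resPerm sb.1 (wemb sb eb) (mem_cmpl_iff sb eb) := congrArg Prod.snd h
  have hres : ∀ t, Lfun (wemb sa ea) (resPerm sa.1 (wemb sa ea) (mem_cmpl_iff sa ea) t)
      = Lfun (wemb sa ea) (resPerm sb.1 (wemb sb eb) (mem_cmpl_iff sb eb) t) :=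
    fun t => congrArg (fun ρ => Lfun (wemb sa ea) (ρ t)) h2
  have hL : Lfun (wemb sa ea) = Lfun (wemb sb eb) := congrArg Lfun hw
  have hcm : cmpl (wemb sa ea) = cmpl (wemb sb eb) := congrArg cmpl hw
  -- first: the permutations agree
  have hs : sa = sb := by
    apply Subtype.ext
    apply Equiv.ext
    intro x
    by_cases hx : x ∈ cmpl (wemb sa ea)
    · obtain ⟨t, ht⟩ := Lfun_surj _ hx
      have ka := resPerm_key sa.1 (wemb sa ea) (mem_cmpl_iff sa ea) t
      have kb := resPerm_key sb.1 (wemb sb eb) (mem_cmpl_iff sb eb) t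
      rw [ht] at ka
      rw [← hL, ht] at kb
      rw [← ka, ← kb]
      exact hres t
    · unfold cmpl at hx
      simp only [Finset.mem_sdiff, Finset.mem_univ, true_and, not_not] at hx
      obtain ⟨q, -, hq⟩ := Finset.mem_image.mp hx
      have ha : sa.1 x = wfun sa ea (nQ q) := by rw [← hq]; exact condW sa ea q
      have hb : sb.1 x = wfun sb eb (nQ q) := by
        rw [← hq, show (wemb sa ea) q = wfun sa ea q from rfl, hwf q]
        exact condW sb eb q
      rw [ha, hb, hwf]
  subst hs
  -- now: the data agree
  have he : ea = eb := by
    funext i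
    have hipos : 0 < i.1 := (Finset.mem_Icc.mp i.2).1
    have hp : ∀ j, (ea i).2 j = (eb i).2 j := by
      intro j
      have hq := hwf ⟨i, j, ⟨0, hipos⟩⟩
      unfold wfun at hq
      simp only at hq
      have s1 : sa.1.SameCycle (bb sa i ((ea i).2 j))
          ((sa.1 ^ ((0 : ℕ) + ((ea i).1 ((ea i).2 j) : ℕ))) (bb sa i ((ea i).2 j))) :=
        ⟨((((0 : ℕ) + ((ea i).1 ((ea i).2 j) : ℕ) : ℕ)) : ℤ), by rw [zpow_natCast]⟩
      have s2 : sa.1.SameCycle (bb sa i ((eb i).2 j))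
          ((sa.1 ^ ((0 : ℕ) + ((eb i).1 ((eb i).2 j) : ℕ))) (bb sa i ((eb i).2 j))) :=
        ⟨((((0 : ℕ) + ((eb i).1 ((eb i).2 j) : ℕ) : ℕ)) : ℤ), by rw [zpow_natCast]⟩
      rw [hq] at s1
      exact bb_sc sa i (s1.trans s2.symm)
    have hpe : (ea i).2 = (eb i).2 := Equiv.ext hp
    have hr : (ea i).1 = (eb i).1 := by
      funext j0
      have hq := hwf ⟨i, ((ea i).2).symm j0, ⟨0, hipos⟩⟩
      unfold wfun at hq
      simp only at hq
      rw [Equiv.apply_symm_apply] at hq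
      rw [hpe, Equiv.apply_symm_apply] at hq
      have hmod := pow_eq_mod_per sa.1 _ hq
      rw [bb_per] at hmod
      simp only [zero_add] at hmod
      apply Fin.ext
      have h2 : ((ea i).1 j0 : ℕ) % i.1 = ((eb i).1 j0 : ℕ) % i.1 := hmod
      rwa [Nat.mod_eq_of_lt ((ea i).1 j0).isLt, Nat.mod_eq_of_lt ((eb i).1 j0).isLt] at h2
    exact Prod.ext hr hpe
  rw [he]

theorem cardE : Fintype.card (E n m) = ∏ i ∈ Finset.Icc 1 n, (i ^ m i * (m i).factorial) := by
  classical
  rw [← Finset.prod_coe_sort (Finset.Icc 1 n) (fun i => i ^ m i * (m i).factorial)]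
  unfold E
  rw [Fintype.card_pi]
  congr 1
  funext i
  rw [Fintype.card_prod, Fintype.card_fun, Fintype.card_fin, Fintype.card_fin,
    Fintype.card_perm, Fintype.card_fin]

theorem main_bound (hne : Nonempty (S n m)) :
    Fintype.card (S n m) * ∏ i ∈ Finset.Icc 1 n, (i ^ m i * (m i).factorial)
      ≤ n.factorial := by
  classical
  obtain ⟨σ₀⟩ := hne
  have hK : K n m ≤ n := per_sum_le σ₀.1 m σ₀.2
  calc Fintype.card (S n m) * ∏ i ∈ Finset.Icc 1 n, (i ^ m i * (m i).factorial)
      = Fintype.card (S n m) * Fintype.card (E n m) := by rw [cardE]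
    _ = Fintype.card (S n m × E n m) := (Fintype.card_prod _ _).symm
    _ ≤ Fintype.card ((Q n m ↪ Fin n) × Equiv.Perm (Fin (n - K n m))) :=
        Fintype.card_le_of_injective _ Phi_injective
    _ = Fintype.card (Q n m ↪ Fin n) * (n - K n m).factorial := by
        rw [Fintype.card_prod, Fintype.card_perm, Fintype.card_fin]
    _ = n.descFactorial (K n m) * (n - K n m).factorial := by
        rw [Fintype.card_embedding_eq, Fintype.card_fin, cardQ]
    _ = n.factorial := by
        rw [mul_comm, Nat.factorial_mul_descFactorial hK]

end Main


end PC

/-- The number of permutations `σ ∈ Sₙ` containing, for each `i ∈ {1, …, n}`, at least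
`mᵢ` cycles of length `i`, is at most `n! ⬝ ∏ᵢ 1/(i^{mᵢ} mᵢ!)`. -/
theorem card_perms_with_prescribed_cycles_le (n : ℕ) (hn : 1 ≤ n) (m : ℕ → ℕ) :
    (Nat.card {σ : Equiv.Perm (Fin n) // ∀ i ∈ Finset.Icc 1 n, m i ≤ cycleCount σ i} : ℝ)
      ≤ (n.factorial : ℝ) *
        ∏ i ∈ Finset.Icc 1 n, (1 : ℝ) / ((i : ℝ) ^ m i * ((m i).factorial : ℝ)) := by
  classical
  have hcard : Nat.card {σ : Equiv.Perm (Fin n) // ∀ i ∈ Finset.Icc 1 n, m i ≤ cycleCount σ i}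
      = Fintype.card (PC.S n m) := Nat.card_eq_fintype_card
  rw [hcard]
  set P : ℕ := ∏ i ∈ Finset.Icc 1 n, (i ^ m i * (m i).factorial) with hP
  have hPpos : 0 < P := by
    apply Finset.prod_pos
    intro i hi
    have : 1 ≤ i := (Finset.mem_Icc.mp hi).1
    positivity
  have hprod : ∏ i ∈ Finset.Icc 1 n, (1 : ℝ) / ((i : ℝ) ^ m i * ((m i).factorial : ℝ))
      = ((P : ℝ))⁻¹ := by
    simp only [one_div, hP]
    rw [Nat.cast_prod, ← Finset.prod_inv_distrib]
    push_cast
    rfl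
  rw [hprod]
  rcases isEmpty_or_nonempty (PC.S n m) with he | hne
  · rw [Fintype.card_eq_zero]
    simp only [Nat.cast_zero]
    positivity
  · have hmain := PC.main_bound (n := n) (m := m) hne
    rw [← hP] at hmain
    rw [← div_eq_mul_inv, le_div_iff₀ (by exact_mod_cast hPpos)]
    exact_mod_cast hmain
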